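/- Let H be a real Hilbert space, f : H → ℝ strongly quasiconvex with value γ > 0 with minimizer x*, let c > 0 and (c_k) a sequence of reals with c_k ≥ c for all k, and let (x^k) be a sequence in H with x^{k+1} ∈ Prox_{c_k f}(x^k) for all k ∈ ℕ. Let b ≥ ‖x^0 − x*‖². Then for every ε > 0 there exists k ≤ ⌈b/ε⌉ such that ‖x^k − x^{k+1}‖² < ε. -/

import Mathlib

lemma ppa_aux_real (β γ t D I A B : ℝ) (hβ : 0 < β) (_hD : 0 ≤ D) (ht0 : 0 < t)
    (hteq : β * γ * (1 - t) = t)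
    (h : A + 1 / (2 * β) * B
      ≤ A - t * (1 - t) * (γ / 2) * D + 1 / (2 * β) * (B + 2 * t * I + t ^ 2 * D)) :
    0 ≤ I := by
  have h' : t * (1 - t) * (γ / 2) * D ≤ 1 / (2 * β) * (2 * t * I + t ^ 2 * D) := by
    have hdist : 1 / (2 * β) * (B + 2 * t * I + t ^ 2 * D)
        = 1 / (2 * β) * B + 1 / (2 * β) * (2 * t * I + t ^ 2 * D) := by ring
    rw [hdist] at h; linarith
  have h2 : 2 * β * (t * (1 - t) * (γ / 2) * D)
      ≤ 2 * β * (1 / (2 * β) * (2 * t * I + t ^ 2 * D)) :=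
    mul_le_mul_of_nonneg_left h' (by linarith)
  have hsimp : 2 * β * (1 / (2 * β) * (2 * t * I + t ^ 2 * D)) = 2 * t * I + t ^ 2 * D := by
    field_simp
  rw [hsimp] at h2
  have h3 : 2 * β * (t * (1 - t) * (γ / 2) * D) = t ^ 2 * D := by
    have : 2 * β * (t * (1 - t) * (γ / 2) * D) = t * (β * γ * (1 - t)) * D := by ring
    rw [this, hteq]; ring
  rw [h3] at h2
  nlinarith [h2, ht0]

/-- Quantitative asymptotic regularity of the proximal point
algorithm for strongly quasiconvex functions. -/
theorem ppa_quantitative_asymptotic_regularity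
    {H : Type*} [NormedAddCommGroup H] [InnerProductSpace ℝ H] [CompleteSpace H]
    (f : H → ℝ) (γ : ℝ) (hγ : 0 < γ)
    (hf : ∀ x y : H, ∀ t ∈ Set.Icc (0 : ℝ) 1,
      f ((1 - t) • x + t • y) ≤ max (f x) (f y) - t * (1 - t) * (γ / 2) * ‖x - y‖ ^ 2)
    (xs : H) (hxs : ∀ y : H, f xs ≤ f y)
    (c : ℝ) (hc : 0 < c) (ck : ℕ → ℝ) (hck : ∀ k, c ≤ ck k)
    (x : ℕ → H)
    (hx : ∀ k : ℕ, ∀ y : H,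
      f (x (k + 1)) + (1 / (2 * ck k)) * ‖x (k + 1) - x k‖ ^ 2
        ≤ f y + (1 / (2 * ck k)) * ‖y - x k‖ ^ 2)
    (b : ℝ) (hb : ‖x 0 - xs‖ ^ 2 ≤ b) :
    ∀ ε > (0 : ℝ), ∃ k ≤ ⌈b / ε⌉₊, ‖x k - x (k + 1)‖ ^ 2 < ε := by
  have hinner : ∀ k : ℕ, (0:ℝ) ≤ inner ℝ (x (k+1) - x k) (xs - x (k+1)) := by
    intro k
    have hβ : (0:ℝ) < ck k := lt_of_lt_of_le hc (hck k)
    have hbγ : 0 < ck k * γ := mul_pos hβ hγ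
    have h1 : (0:ℝ) < 1 + ck k * γ := by linarith
    set t : ℝ := ck k * γ / (1 + ck k * γ) with htdef
    have ht0 : 0 < t := div_pos hbγ h1
    have ht1 : t ≤ 1 := by rw [div_le_one h1]; linarith
    have hteq : ck k * γ * (1 - t) = t := by rw [htdef]; field_simp; ring
    have hA := hf (x (k+1)) xs t ⟨le_of_lt ht0, ht1⟩
    rw [max_eq_left (hxs (x (k+1)))] at hA
    have hB := hx k ((1 - t) • (x (k+1)) + t • xs)
    have hy : ((1 - t) • (x (k+1)) + t • xs) - x k
        = (x (k+1) - x k) + t • (xs - x (k+1)) := by module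
    have hexp : ‖((1 - t) • (x (k+1)) + t • xs) - x k‖ ^ 2
        = ‖x (k+1) - x k‖ ^ 2 + 2 * t * inner ℝ (x (k+1) - x k) (xs - x (k+1))
          + t ^ 2 * ‖x (k+1) - xs‖ ^ 2 := by
      rw [hy, norm_add_sq_real, real_inner_smul_right, norm_smul,
        norm_sub_rev xs (x (k+1)), Real.norm_eq_abs, mul_pow, sq_abs]
      ring
    rw [hexp] at hB
    exact ppa_aux_real (ck k) γ t (‖x (k+1) - xs‖ ^ 2)
      (inner ℝ (x (k+1) - x k) (xs - x (k+1))) (f (x (k+1))) (‖x (k+1) - x k‖ ^ 2)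
      hβ (by positivity) ht0 hteq (by linarith)
  have fejer : ∀ k : ℕ, ‖x (k+1) - xs‖ ^ 2 + ‖x k - x (k+1)‖ ^ 2 ≤ ‖x k - xs‖ ^ 2 := by
    intro k
    have hsplit := norm_add_sq_real (x k - x (k+1)) (x (k+1) - xs)
    rw [sub_add_sub_cancel] at hsplit
    have hie : (inner ℝ (x k - x (k+1)) (x (k+1) - xs) : ℝ)
        = inner ℝ (x (k+1) - x k) (xs - x (k+1)) := by
      rw [← inner_neg_neg (𝕜 := ℝ)]; simp [neg_sub]
    have h := hinner k
    rw [← hie] at h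
    linarith [hsplit, h]
  have tele : ∀ n : ℕ,
      (∑ k ∈ Finset.range n, ‖x k - x (k+1)‖ ^ 2) + ‖x n - xs‖ ^ 2 ≤ ‖x 0 - xs‖ ^ 2 := by
    intro n
    induction n with
    | zero => simp
    | succ n ih =>
      rw [Finset.sum_range_succ]
      have := fejer n
      linarith
  intro ε hε
  by_contra hcon
  push_neg at hcon
  set N := ⌈b / ε⌉₊ with hN
  have hbig : ∀ k ∈ Finset.range (N + 1), ε ≤ ‖x k - x (k+1)‖ ^ 2 := by
    intro k hk
    exact hcon k (Nat.lt_succ_iff.mp (Finset.mem_range.mp hk))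
  have hsum : (N + 1 : ℝ) * ε ≤ ∑ k ∈ Finset.range (N + 1), ‖x k - x (k+1)‖ ^ 2 := by
    calc (N + 1 : ℝ) * ε = ∑ _k ∈ Finset.range (N + 1), ε := by
          simp [Finset.sum_const, mul_comm]
      _ ≤ _ := Finset.sum_le_sum hbig
  have hle : (∑ k ∈ Finset.range (N + 1), ‖x k - x (k+1)‖ ^ 2) ≤ b := by
    have := tele (N + 1)
    nlinarith [sq_nonneg ‖x (N+1) - xs‖]
  have hNb : (b / ε : ℝ) ≤ N := Nat.le_ceil _
  have hfin : (N + 1 : ℝ) * ε ≤ b := le_trans hsum hle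
  have hbεε : b / ε * ε = b := div_mul_cancel₀ b (ne_of_gt hε)
  nlinarith [hNb, hε, hfin, hbεε]
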